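/- Let X be a compact Hausdorff topological space and let P be a closed subgroup of H(X), the group of all homeomorphisms of X with the compact-open topology τ_co. Then τ_co restricted to P is minimal within the class of π-uniform topologies on P; that is, every Hausdorff group topology σ on P which is coarser than τ_co and for which the natural evaluation action (P, σ) × X → X is π-uniform (with respect to the unique compatible uniformity on X) coincides with τ_co. -/

import Mathlib

open scoped Topology

/-- The group of self-homeomorphisms of `X`, with composition as multiplication:
`(f * g) x = f (g x)`, identity `Homeomorph.refl` and inverse `Homeomorph.symm`. -/
instance homeoGroup (X : Type*) [TopologicalSpace X] : Group (X ≃ₜ X) where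
  mul f g := g.trans f
  one := Homeomorph.refl X
  inv := Homeomorph.symm
  mul_assoc f g h := rfl
  one_mul f := rfl
  mul_one f := rfl
  inv_mul_cancel f := by ext x; exact f.symm_apply_apply x

/-- The compact-open topology on the homeomorphism group `H(X)`, induced from the
compact-open topology on `C(X, X)`. -/
def coTop (X : Type*) [TopologicalSpace X] : TopologicalSpace (X ≃ₜ X) :=
  TopologicalSpace.induced (fun f : X ≃ₜ X => (f : C(X, X))) ContinuousMap.compactOpen

/-- The unique uniformity compatible with the topology of a compact Hausdorff space. -/
def cptUnif (X : Type*) [TopologicalSpace X] [CompactSpace X] [T2Space X] :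
    Filter (X × X) :=
  @uniformity X uniformSpaceOfCompactR1

/-- An action `act` of a group `G` equipped with a topology `σ` on a set `X` equipped with a
uniformity (filter) `𝔅` is *π-uniform* if for every `g₀ ∈ G` and every entourage `ε ∈ 𝔅`
there exist an entourage `δ ∈ 𝔅` and a neighborhood `U` of `g₀` such that
`(g • x, g • y) ∈ ε` whenever `(x, y) ∈ δ` and `g ∈ U`. -/
def IsPiUniform {G X : Type*} (σ : TopologicalSpace G) (𝔅 : Filter (X × X))
    (act : G → X → X) : Prop :=
  ∀ g₀ : G, ∀ ε ∈ 𝔅, ∃ δ ∈ 𝔅, ∃ U ∈ @nhds G σ g₀,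
    ∀ g ∈ U, ∀ x y : X, (x, y) ∈ δ → (act g x, act g y) ∈ ε

open Filter Set Uniformity UniformSpace

/-- **Key lemma.**  If an action is π-uniform for a topology `σ`, and an ultrafilter `F`
converges to `g₀` in `σ` while the associated maps converge pointwise to `f`, then they
converge to `f` *uniformly*. -/
lemma IsPiUniform.tendstoUniformly_of_ultrafilter {G X : Type*} [UniformSpace X]
    [CompactSpace X] {σ : TopologicalSpace G} {act : G → X → X}
    (hπ : IsPiUniform σ (𝓤 X) act) (g₀ : G) (F : Ultrafilter G)
    (hF : ↑F ≤ @nhds G σ g₀) {f : X → X}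
    (hf : Tendsto (fun g => act g) (F : Filter G) (𝓝 f)) :
    TendstoUniformly (fun g => act g) f F := by
  intro ε hε
  obtain ⟨ε₁, hε₁u, hε₁symm, hε₁ε⟩ := comp_comp_symm_mem_uniformity_sets hε
  obtain ⟨ε₂, ⟨hε₂u, hε₂cl⟩, hε₂ε₁⟩ := uniformity_hasBasis_closed.mem_iff.mp hε₁u
  set ε₃ : Set (X × X) := ε₂ ∩ Prod.swap ⁻¹' ε₂ with hε₃def
  have hε₃u : ε₃ ∈ 𝓤 X := inter_mem hε₂u (tendsto_swap_uniformity hε₂u)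
  have hε₃cl : IsClosed ε₃ := hε₂cl.inter (hε₂cl.preimage continuous_swap)
  have hε₃symm : ∀ {a b : X}, (a, b) ∈ ε₃ → (b, a) ∈ ε₃ := by
    rintro a b ⟨h1, h2⟩; exact ⟨h2, h1⟩
  have hε₃ε₁ : ε₃ ⊆ ε₁ := fun p hp => hε₂ε₁ hp.1
  have hcomp : SetRel.comp (SetRel.comp ε₃ ε₃) ε₃ ⊆ ε :=
    Subset.trans (SetRel.comp_subset_comp (SetRel.comp_subset_comp hε₃ε₁ hε₃ε₁) hε₃ε₁) hε₁ε
  obtain ⟨δ, hδu, U, hU, hprop⟩ := hπ g₀ ε₃ hε₃u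
  obtain ⟨s, -, hcover⟩ := isCompact_univ.elim_nhds_subcover (fun x => ball x δ)
    (fun x _ => ball_mem_nhds x hδu)
  have hpt : ∀ x : X, Tendsto (fun g => act g x) (F : Filter G) (𝓝 (f x)) :=
    tendsto_pi_nhds.mp hf
  -- the pointwise limit `f` inherits the `δ`-`ε₃` modulus, since `ε₃` is closed
  have hfmod : ∀ x y : X, (x, y) ∈ δ → (f x, f y) ∈ ε₃ := by
    intro x y hxy
    refine hε₃cl.mem_of_tendsto ((hpt x).prodMk_nhds (hpt y)) ?_
    filter_upwards [hF hU] with g hg using hprop g hg x y hxy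
  have hptev : ∀ᶠ g in (F : Filter G), ∀ x ∈ s, (act g x, f x) ∈ ε₃ := by
    rw [eventually_all_finset]
    intro x hx
    have hmem : {y : X | (y, f x) ∈ ε₃} ∈ 𝓝 (f x) := by
      filter_upwards [ball_mem_nhds (f x) hε₃u] with y hy using hε₃symm hy
    exact hpt x hmem
  filter_upwards [hF hU, hptev] with g hgU hgs
  intro x
  have hx : x ∈ ⋃ y ∈ s, ball y δ := hcover (mem_univ x)
  obtain ⟨y, hys, hxy⟩ := mem_iUnion₂.mp hx
  have hxy' : (y, x) ∈ δ := hxy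
  exact hcomp ⟨act g y, ⟨f y, hε₃symm (hfmod y x hxy'), hε₃symm (hgs y hys)⟩,
    hprop g hgU y x hxy'⟩

/-- Let `X` be a compact Hausdorff space and let `P` be a closed subgroup of
the homeomorphism group `H(X)` with the compact-open topology.  Then the compact-open
topology on `P` is minimal within the class of π-uniform topologies on `P`: every coarser
Hausdorff group topology `σ` on `P` for which the evaluation action of `(P, σ)` on `X` is
π-uniform (with respect to the unique compatible uniformity on `X`) coincides with the
compact-open topology. -/
theorem compactOpen_minimal_piUniform_homeos {X : Type*}
    [TopologicalSpace X] [CompactSpace X] [T2Space X]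
    (P : Subgroup (X ≃ₜ X))
    (hPclosed : IsClosed[coTop X] (P : Set (X ≃ₜ X)))
    (σ : TopologicalSpace ↥P)
    (hσgrp : @IsTopologicalGroup ↥P σ _) (hσT2 : @T2Space ↥P σ)
    (hcoarse : TopologicalSpace.induced (Subtype.val : ↥P → X ≃ₜ X) (coTop X) ≤ σ)
    (hπ : IsPiUniform σ (cptUnif X) (fun (p : ↥P) (x : X) => (p : X ≃ₜ X) x)) :
    σ = TopologicalSpace.induced (Subtype.val : ↥P → X ≃ₜ X) (coTop X) := by
  letI uX : UniformSpace X := uniformSpaceOfCompactR1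
  have hπ' : IsPiUniform σ (𝓤 X) (fun (p : ↥P) (x : X) => (p : X ≃ₜ X) x) := hπ
  set e : ↥P → X → X := fun p x => (p : X ≃ₜ X) x with he
  set τ : TopologicalSpace ↥P :=
    TopologicalSpace.induced (Subtype.val : ↥P → X ≃ₜ X) (coTop X) with hτ
  refine le_antisymm ?_ hcoarse
  rw [le_iff_nhds]
  intro g₀
  rw [Filter.le_iff_ultrafilter]
  intro F hFσ
  -- pointwise limits of `g` and `g⁻¹` along `F` in the compact space `X → X`
  obtain ⟨f, -, hfpt⟩ := isCompact_univ.ultrafilter_le_nhds (F.map e)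
    (le_principal_iff.mpr univ_mem)
  have hfpt' : Tendsto e (F : Filter ↥P) (𝓝 f) := hfpt
  set F' : Ultrafilter ↥P := F.map (·⁻¹) with hF'
  have hF'σ : (F' : Filter ↥P) ≤ @nhds ↥P σ g₀⁻¹ := by
    have hc : @Continuous ↥P ↥P σ σ (·⁻¹) := hσgrp.toContinuousInv.continuous_inv
    calc (F' : Filter ↥P) = Filter.map (·⁻¹) F := rfl
      _ ≤ Filter.map (·⁻¹) (@nhds ↥P σ g₀) := Filter.map_mono hFσ
      _ ≤ @nhds ↥P σ g₀⁻¹ := @Continuous.tendsto ↥P ↥P σ σ _ hc g₀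
  obtain ⟨h, -, hhpt⟩ := isCompact_univ.ultrafilter_le_nhds (F'.map e)
    (le_principal_iff.mpr univ_mem)
  have hhpt' : Tendsto e (F' : Filter ↥P) (𝓝 h) := hhpt
  -- uniform convergence
  have hfu : TendstoUniformly e f (F : Filter ↥P) :=
    hπ'.tendstoUniformly_of_ultrafilter g₀ F hFσ hfpt'
  have hhu : TendstoUniformly e h (F' : Filter ↥P) :=
    hπ'.tendstoUniformly_of_ultrafilter g₀⁻¹ F' hF'σ hhpt'
  have hfcont : Continuous f :=
    hfu.continuous (Eventually.of_forall fun g : ↥P => (g : X ≃ₜ X).continuous).frequently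
  have hhcont : Continuous h :=
    hhu.continuous (Eventually.of_forall fun g : ↥P => (g : X ≃ₜ X).continuous).frequently
  have hcoeinv : ∀ g : ↥P, e g⁻¹ = fun x => ((g : X ≃ₜ X).symm x) := by
    intro g; funext x; simp only [he]
    rw [show ((g⁻¹ : ↥P) : X ≃ₜ X) = ((g : X ≃ₜ X))⁻¹ from rfl]
    rfl
  -- `f` and `h` are mutually inverse
  have hfh : ∀ x, f (h x) = x := by
    intro x
    have hg : Tendsto (fun g : ↥P => e g⁻¹ x) (F : Filter ↥P) (𝓝 (h x)) :=
      (tendsto_pi_nhds.mp hhpt' x).comp tendsto_map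
    have h1 : Tendsto (fun g : ↥P => e g (e g⁻¹ x)) (F : Filter ↥P) (𝓝 (f (h x))) :=
      hfu.tendsto_comp hfcont.continuousAt hg
    have h2 : (fun g : ↥P => e g (e g⁻¹ x)) = fun _ => x := by
      funext g
      have := hcoeinv g
      rw [this]
      exact (g : X ≃ₜ X).apply_symm_apply x
    rw [h2] at h1
    exact tendsto_nhds_unique h1 tendsto_const_nhds
  have hhf : ∀ x, h (f x) = x := by
    intro x
    have hhu' : TendstoUniformly (fun g : ↥P => e g⁻¹) h (F : Filter ↥P) := by
      intro u hu
      exact hhu u hu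
    have hg : Tendsto (fun g : ↥P => e g x) (F : Filter ↥P) (𝓝 (f x)) :=
      tendsto_pi_nhds.mp hfpt' x
    have h1 : Tendsto (fun g : ↥P => e g⁻¹ (e g x)) (F : Filter ↥P) (𝓝 (h (f x))) :=
      hhu'.tendsto_comp hhcont.continuousAt hg
    have h2 : (fun g : ↥P => e g⁻¹ (e g x)) = fun _ => x := by
      funext g
      rw [hcoeinv g]
      exact (g : X ≃ₜ X).symm_apply_apply x
    rw [h2] at h1
    exact tendsto_nhds_unique h1 tendsto_const_nhds
  -- assemble the limit homeomorphism
  let Φ : X ≃ₜ X :=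
    { toFun := f
      invFun := h
      left_inv := hhf
      right_inv := hfh
      continuous_toFun := hfcont
      continuous_invFun := hhcont }
  -- `F` converges to `Φ` in the compact-open topology
  letI tH : TopologicalSpace (X ≃ₜ X) := coTop X
  have hco : Tendsto (Subtype.val : ↥P → X ≃ₜ X) (F : Filter ↥P) (𝓝 Φ) := by
    rw [show (𝓝 Φ) = @nhds _ (coTop X) Φ from rfl, coTop, nhds_induced, tendsto_comap_iff]
    rw [ContinuousMap.tendsto_iff_tendstoUniformly]
    exact hfu
  -- `Φ` belongs to `P` since `P` is closed
  have hmem : Φ ∈ (P : Set (X ≃ₜ X)) := by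
    rw [← hPclosed.closure_eq]
    rw [mem_closure_iff_ultrafilter]
    exact ⟨F.map Subtype.val, Filter.mem_map.mpr (univ_mem' fun g => g.2),
      (le_def.mpr fun s hs => hco hs : (F.map Subtype.val : Filter (X ≃ₜ X)) ≤ 𝓝 Φ)⟩
  set q : ↥P := ⟨Φ, hmem⟩ with hq
  have hFτ : (F : Filter ↥P) ≤ @nhds ↥P τ q := by
    rw [hτ, nhds_induced]
    exact Filter.map_le_iff_le_comap.mp hco
  have hFσq : (F : Filter ↥P) ≤ @nhds ↥P σ q :=
    le_trans hFτ ((le_iff_nhds τ σ).mp hcoarse q)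
  have hqg : q = g₀ := (@t2_iff_ultrafilter ↥P σ).mp hσT2 F hFσq hFσ
  rw [← hqg]
  exact hFτ
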